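/- The determinant of the (n+1)×(n+1) Bernstein–Vandermonde matrix A with entries A[i][j] = C(n,j)·(1-x_i)^{n-j}·x_i^j (rows indexed by i=1,...,n+1, columns by j=0,...,n) equals the product of all binomial coefficients C(n,0)·C(n,1)···C(n,n) times the product over all pairs 1 ≤ i < j ≤ n+1 of (x_j - x_i). -/

import Mathlib

lemma bv_key (n : ℕ) (t : ℝ) (j : Fin (n + 1)) :
    ∑ k : Fin (n + 1),
      (if (j : ℕ) ≤ (k : ℕ) then
        (-1 : ℝ) ^ ((k : ℕ) - (j : ℕ)) * ((n - (j : ℕ)).choose ((k : ℕ) - (j : ℕ))) else 0)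
        * t ^ (k : ℕ)
      = (1 - t) ^ (n - (j : ℕ)) * t ^ (j : ℕ) := by
  have hj : (j : ℕ) ≤ n := Nat.lt_succ_iff.mp j.isLt
  rw [Fin.sum_univ_eq_sum_range
      (fun k => (if (j : ℕ) ≤ k then
        (-1 : ℝ) ^ (k - (j : ℕ)) * ((n - (j : ℕ)).choose (k - (j : ℕ))) else 0) * t ^ k)]
  rw [← Finset.sum_filter_add_sum_filter_not (Finset.range (n+1)) (fun k => (j : ℕ) ≤ k)]
  have h2 : ∑ k ∈ (Finset.range (n+1)).filter (fun k => ¬ (j : ℕ) ≤ k),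
      (if (j : ℕ) ≤ k then
        (-1 : ℝ) ^ (k - (j : ℕ)) * ((n - (j : ℕ)).choose (k - (j : ℕ))) else 0) * t ^ k = 0 := by
    apply Finset.sum_eq_zero
    intro k hk
    simp at hk
    simp [Nat.not_le.mpr hk.2]
  rw [h2, add_zero]
  have hfil : (Finset.range (n+1)).filter (fun k => (j : ℕ) ≤ k) = Finset.Ico (j : ℕ) (n+1) := by
    ext k; simp [Finset.mem_Ico]; omega
  rw [hfil, Finset.sum_Ico_eq_sum_range]
  have hm : n + 1 - (j : ℕ) = (n - (j : ℕ)) + 1 := by omega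
  rw [hm]
  have expand : (1 - t) ^ (n - (j : ℕ)) = ∑ k ∈ Finset.range ((n - (j : ℕ)) + 1),
      (-t) ^ k * 1 ^ ((n - (j : ℕ)) - k) * ((n - (j : ℕ)).choose k) := by
    rw [← add_pow]; ring_nf
  rw [expand, Finset.sum_mul]
  apply Finset.sum_congr rfl
  intro k hk
  simp only [one_pow, mul_one]
  have : (j : ℕ) + k - (j : ℕ) = k := by omega
  rw [this, if_pos (Nat.le_add_right _ _)]
  rw [pow_add, neg_pow]
  ring

theorem bernstein_vandermonde_det (n : ℕ) (x : Fin (n + 1) → ℝ)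
    (A : Matrix (Fin (n + 1)) (Fin (n + 1)) ℝ)
    (hA : ∀ i j, A i j = (n.choose j : ℝ) * (1 - x i) ^ (n - (j : ℕ)) * x i ^ (j : ℕ)) :
    A.det = (∏ j : Fin (n + 1), (n.choose j : ℝ)) *
      ∏ i : Fin (n + 1), ∏ j ∈ Finset.Ioi i, (x j - x i) := by
  set S : Matrix (Fin (n + 1)) (Fin (n + 1)) ℝ := fun k j =>
    (if (j : ℕ) ≤ (k : ℕ) then
      (-1 : ℝ) ^ ((k : ℕ) - (j : ℕ)) * ((n - (j : ℕ)).choose ((k : ℕ) - (j : ℕ))) else 0)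
      * (n.choose (j : ℕ) : ℝ) with hS
  have hAeq : A = Matrix.vandermonde x * S := by
    ext i j
    rw [Matrix.mul_apply, hA]
    simp only [hS, Matrix.vandermonde_apply]
    rw [show (∑ k : Fin (n+1), x i ^ (k : ℕ) *
        ((if (j : ℕ) ≤ (k : ℕ) then
      (-1 : ℝ) ^ ((k : ℕ) - (j : ℕ)) * ((n - (j : ℕ)).choose ((k : ℕ) - (j : ℕ))) else 0)
      * (n.choose (j : ℕ) : ℝ))) = (n.choose (j : ℕ) : ℝ) * ∑ k : Fin (n+1),
        (if (j : ℕ) ≤ (k : ℕ) then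
      (-1 : ℝ) ^ ((k : ℕ) - (j : ℕ)) * ((n - (j : ℕ)).choose ((k : ℕ) - (j : ℕ))) else 0)
      * x i ^ (k : ℕ) from by rw [Finset.mul_sum]; apply Finset.sum_congr rfl; intros; ring]
    rw [bv_key]
    ring
  have hSdet : S.det = ∏ j : Fin (n + 1), (n.choose j : ℝ) := by
    rw [Matrix.det_of_lowerTriangular S (fun i j h => by
      have hij : (i : ℕ) < (j : ℕ) := h
      simp only [hS]
      rw [if_neg (Nat.not_le.mpr hij), zero_mul])]
    apply Finset.prod_congr rfl
    intro j _
    simp [hS]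
  rw [hAeq, Matrix.det_mul, Matrix.det_vandermonde, hSdet]
  ring
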